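/- Suppose the hospital-side choice function C_H in the original market is rationalized by f^F(Y) = g^F(ξ(Y)) + f_R(ξ(Y)) + ε·f_H(Y), where g^F is 0 on feasible distributions and −∞ otherwise, and ε > 0 is sufficiently small. If X is a stable allocation in the original market and x is a contract with x ∈ C_D(X + x), then: (a) ξ(X) maximizes f_R over feasible distributions ξ(X') with X' ⊆ X + x, and (b) among all X' ⊆ X + x with ξ(X') = ξ(X), the set X maximizes f_H. -/

import Mathlib

open Finset

variable {D H : Type*} [Fintype D] [DecidableEq D] [Fintype H] [DecidableEq H]

/-- The doctor-side choice from a set of contracts: each doctor keeps her most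
preferred acceptable contract (preferences given by the list `pref d` of `d`'s
acceptable hospitals in order of strict preference). -/
def chooseD (pref : D → List H) (Y : Finset (D × H)) : Finset (D × H) :=
  Y.filter (fun p => p.2 ∈ pref p.1 ∧
    ∀ h' ∈ pref p.1, (p.1, h') ∈ Y → (pref p.1).idxOf p.2 ≤ (pref p.1).idxOf h')

/-- Hatfield–Milgrom stability of an allocation `X` with respect to the
hospital-side choice function `CH`. -/
def StableAlloc (pref : D → List H) (CH : Finset (D × H) → Finset (D × H))
    (X : Finset (D × H)) : Prop :=
  chooseD pref X = X ∧ CH X = X ∧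
    ∀ x : D × H, x ∉ X → x ∈ chooseD pref (insert x X) → x ∉ CH (insert x X)

/-- `X ⪰_D X'`: every doctor weakly prefers her contract in `X` to that in `X'`. -/
def WeakPrefD (pref : D → List H) (X X' : Finset (D × H)) : Prop :=
  ∀ d h', (d, h') ∈ X' →
    ∃ h, (d, h) ∈ X ∧ (pref d).idxOf h ≤ (pref d).idxOf h'

/-- The distribution `ξ(X)`: the number of contracts of `X` naming hospital `h`. -/
def xiDist (X : Finset (D × H)) (h : H) : ℕ :=
  (X.filter (fun p => p.2 = h)).card

/-- Substitutability of a choice function. -/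
def Substitutable {α : Type*} [DecidableEq α] (C : Finset α → Finset α) : Prop :=
  ∀ (Y : Finset α) (x x' : α), x ∉ C (insert x Y) → x ∉ C (insert x' (insert x Y))

/-- The law of aggregate demand. -/
def LawOfAggregateDemand {α : Type*} (C : Finset α → Finset α) : Prop :=
  ∀ Y Y' : Finset α, Y' ⊆ Y → (C Y').card ≤ (C Y).card

/-- Irrelevance of rejected contracts. -/
def IRC {α : Type*} [DecidableEq α] (C : Finset α → Finset α) : Prop :=
  ∀ (Y : Finset α) (x : α), x ∉ C (insert x Y) → C Y = C (insert x Y)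

/-- The distribution of a set of contracts, as a function `H → ℕ`. -/
def distOf (Y : Finset (D × H)) : H → ℕ := fun h => xiDist Y h

/-- Feasibility of a distribution: hospital capacities and regional caps hold. -/
def FeasDist {R : Type*} [Fintype R] [DecidableEq R] (q : H → ℕ) (region : H → R)
    (qreg : R → ℕ) (v : H → ℕ) : Prop :=
  (∀ h, v h ≤ q h) ∧ ∀ r, ∑ h ∈ univ.filter (fun h => region h = r), v h ≤ qreg r

/-- `f` rationalizes `C` (extended-real-valued utilities): `C Y` is the unique
`f`-maximizer among subsets of `Y`. -/
def RationalizesE {α : Type*} (C : Finset α → Finset α) (f : Finset α → EReal) : Prop :=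
  ∀ Y : Finset α, C Y ⊆ Y ∧ ∀ Y' ⊆ Y, Y' ≠ C Y → f Y' < f (C Y)

/-- suppose the hospital-side choice function `CH` of the original
market is rationalized by `f^F(Y) = g^F(ξ(Y)) + f_R(ξ(Y)) + ε·f_H(Y)` where `g^F`
is `0` on feasible distributions and `⊥` otherwise and `ε > 0` is sufficiently
small.  If `X` is stable and `x ∈ C_D(X + x)`, then (a) `ξ(X)` maximizes `f_R`
over feasible distributions of subsets of `X + x`, and (b) among subsets of
`X + x` with distribution `ξ(X)`, the set `X` maximizes `f_H`. -/
theorem stable_maximizes_region_and_hospital_utility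
    {R : Type*} [Fintype R] [DecidableEq R]
    (pref : D → List H) (hnd : ∀ d, (pref d).Nodup)
    (q : H → ℕ) (region : H → R) (qreg : R → ℕ)
    (CH : Finset (D × H) → Finset (D × H))
    (gF : (H → ℕ) → EReal) (fR : (H → ℕ) → ℝ) (fH : Finset (D × H) → ℝ) (ε : ℝ)
    (hg0 : ∀ v, FeasDist q region qreg v → gF v = 0)
    (hgbot : ∀ v, ¬ FeasDist q region qreg v → gF v = ⊥)
    (hε : 0 < ε)
    (hsmall : ∀ v w, FeasDist q region qreg v → FeasDist q region qreg w →
      fR v ≠ fR w → ∀ Y Y' : Finset (D × H), ε * (fH Y - fH Y') < |fR v - fR w|)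
    (hrat : RationalizesE CH
      (fun Y => gF (distOf Y) + ((fR (distOf Y) : ℝ) : EReal) + ((ε * fH Y : ℝ) : EReal)))
    (X : Finset (D × H)) (hX : StableAlloc pref CH X)
    (x : D × H) (hx : x ∉ X) (hxC : x ∈ chooseD pref (insert x X)) :
    (∀ X' ⊆ insert x X, FeasDist q region qreg (distOf X') →
        fR (distOf X') ≤ fR (distOf X)) ∧
    (∀ X' ⊆ insert x X, distOf X' = distOf X → fH X' ≤ fH X) := by
  obtain ⟨hCD, hCHX, hstab⟩ := hX
  set f : Finset (D × H) → EReal := fun Y =>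
    gF (distOf Y) + ((fR (distOf Y) : ℝ) : EReal) + ((ε * fH Y : ℝ) : EReal) with hf
  have hratX := hrat X
  have hratI := hrat (insert x X)
  have hxZ : x ∉ CH (insert x X) := hstab x hx hxC
  have hZX : CH (insert x X) = X := by
    by_contra hne
    have h1 : f X < f (CH (insert x X)) :=
      hratI.2 X (subset_insert _ _) (fun h => hne h.symm)
    have hsub : CH (insert x X) ⊆ X := by
      intro y hy
      rcases mem_insert.mp (hratI.1 hy) with h | h
      · exact absurd (h ▸ hy) hxZ
      · exact h
    have h2 : f (CH (insert x X)) < f X := by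
      have := hratX.2 (CH (insert x X)) hsub (by rw [hCHX]; exact hne)
      rwa [hCHX] at this
    exact absurd h1 h2.asymm
  have hmax : ∀ X' ⊆ insert x X, X' ≠ X → f X' < f X := by
    intro X' hsub hne
    have := hratI.2 X' hsub (by rw [hZX]; exact hne)
    rwa [hZX] at this
  have hfeas0 : FeasDist q region qreg (distOf (∅ : Finset (D × H))) := by
    constructor
    · intro h; simp [distOf, xiDist]
    · intro r; simp [distOf, xiDist]
  have hfeasX : FeasDist q region qreg (distOf X) := by
    by_cases hXe : X = ∅
    · subst hXe; exact hfeas0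
    · by_contra hnf
      have hbot : f X = ⊥ := by
        simp only [hf, hgbot _ hnf]
        rfl
      have hlt := hmax ∅ (empty_subset _) (fun h => hXe h.symm)
      rw [hbot] at hlt
      exact absurd hlt (by simp)
  have fval : ∀ Y : Finset (D × H), FeasDist q region qreg (distOf Y) →
      f Y = ((fR (distOf Y) + ε * fH Y : ℝ) : EReal) := by
    intro Y hY
    simp only [hf, hg0 _ hY, zero_add, ← EReal.coe_add]
  constructor
  · intro X' hsub hfeas'
    by_cases hne : X' = X
    · rw [hne]
    · have hlt := hmax X' hsub hne
      rw [fval X' hfeas', fval X hfeasX, EReal.coe_lt_coe_iff] at hlt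
      by_contra hgt
      push_neg at hgt
      have hne' : fR (distOf X') ≠ fR (distOf X) := ne_of_gt hgt
      have hs := hsmall (distOf X') (distOf X) hfeas' hfeasX hne' X X'
      rw [abs_of_pos (sub_pos.mpr hgt), mul_sub] at hs
      linarith
  · intro X' hsub hdist
    by_cases hne : X' = X
    · rw [hne]
    · have hfeas' : FeasDist q region qreg (distOf X') := hdist ▸ hfeasX
      have hlt := hmax X' hsub hne
      rw [fval X' hfeas', fval X hfeasX, EReal.coe_lt_coe_iff, hdist] at hlt
      have : fH X' < fH X := (mul_lt_mul_iff_right₀ hε).mp (by linarith)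
      exact this.le
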